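/- Let ε > 0, q ∈ [0,1], and let X be a real symmetric positive semidefinite n×n matrix. Set C = 2ε(1+ε^q). If 0 ≤ α ≤ ε/(4(1+ε^q)), then the matrix X − 2αC·(XXᵀ + εI)⁻²·X is positive semidefinite. -/

import Mathlib

open Matrix

private lemma psd_smul_aux {n : ℕ} {c : ℝ} (hc : 0 ≤ c) {A : Matrix (Fin n) (Fin n) ℝ}
    (hA : A.PosSemidef) : (c • A).PosSemidef := by
  constructor
  · rw [Matrix.IsHermitian, Matrix.conjTranspose_smul, star_trivial, hA.1.eq]
  · intro x
    exact (Matrix.PosSemidef.smul hA hc).2 x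

private lemma pd_smul_aux {n : ℕ} {c : ℝ} (hc : 0 < c) {A : Matrix (Fin n) (Fin n) ℝ}
    (hA : A.PosDef) : (c • A).PosDef := by
  constructor
  · rw [Matrix.IsHermitian, Matrix.conjTranspose_smul, star_trivial, hA.1.eq]
  · intro x hx
    exact (Matrix.PosDef.smul hA hc).2 hx

/-- First step of the proof of Theorem 3.1: for `ε > 0`, `q ∈ [0,1]`, a real symmetric
PSD `n×n` matrix `X`, `C = 2ε(1+ε^q)`, and `0 ≤ α ≤ ε / (4(1+ε^q))`, the plain gradient
step `X - 2αC·(XXᵀ + εI)⁻²·X` is positive semidefinite. -/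
theorem gradient_step_psd_singular_value_relaxation
    {n : ℕ} (ε q α : ℝ) (hε : 0 < ε) (hq0 : 0 ≤ q) (hq1 : q ≤ 1)
    (X : Matrix (Fin n) (Fin n) ℝ) (hX : X.PosSemidef)
    (hα0 : 0 ≤ α) (hα : α ≤ ε / (4 * (1 + ε ^ q))) :
    Matrix.PosSemidef
      (X - (2 * α) • ((2 * ε * (1 + ε ^ q)) • ((((X * Xᵀ + ε • 1)⁻¹) ^ 2) * X))) := by
  have hεq : 0 < ε ^ q := Real.rpow_pos_of_pos hε q
  have hden : 0 < 1 + ε ^ q := by linarith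
  set c : ℝ := 2 * α * (2 * ε * (1 + ε ^ q)) with hc
  have hc0 : 0 ≤ c := by positivity
  have hcε : c ≤ ε ^ 2 := by
    have h4 : (0:ℝ) < 4 * (1 + ε ^ q) := by positivity
    have hα' : α * (4 * (1 + ε ^ q)) ≤ ε := by
      calc α * (4 * (1 + ε ^ q)) ≤ (ε / (4 * (1 + ε ^ q))) * (4 * (1 + ε ^ q)) :=
            mul_le_mul_of_nonneg_right hα h4.le
      _ = ε := div_mul_cancel₀ ε h4.ne'
    nlinarith
  have hXsym : Xᵀ = X := by
    have h := hX.isHermitian.eq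
    rw [← Matrix.conjTranspose_eq_transpose_of_trivial, h]
  set M : Matrix (Fin n) (Fin n) ℝ := X * X + ε • 1 with hM
  have hXXherm : (X * X).IsHermitian := by
    rw [Matrix.IsHermitian, Matrix.conjTranspose_mul, hX.isHermitian.eq]
  have hMherm : M.IsHermitian := by
    refine hXXherm.add ?_
    simp [Matrix.IsHermitian, Matrix.conjTranspose_smul]
  have hMpd : M.PosDef := by
    have h1 : (X * X).PosSemidef := by
      have := Matrix.posSemidef_conjTranspose_mul_self X
      rwa [hX.isHermitian.eq] at this
    have h2 : (ε • (1 : Matrix (Fin n) (Fin n) ℝ)).PosDef := pd_smul_aux hε Matrix.PosDef.one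
    exact Matrix.PosDef.posSemidef_add h1 h2
  have hMdet : IsUnit M.det := hMpd.det_pos.ne'.isUnit
  have hMinv : M * M⁻¹ = 1 := Matrix.mul_nonsing_inv M hMdet
  have hMinv' : M⁻¹ * M = 1 := Matrix.nonsing_inv_mul M hMdet
  -- X commutes with M and M⁻¹
  have hcomm : X * M = M * X := by
    simp [hM, mul_add, add_mul, Matrix.mul_smul, Matrix.smul_mul, mul_assoc]
  have hcommInv : X * M⁻¹ = M⁻¹ * X := by
    calc X * M⁻¹ = (M⁻¹ * M) * X * M⁻¹ := by rw [hMinv', one_mul]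
    _ = M⁻¹ * (X * M) * M⁻¹ := by rw [mul_assoc M⁻¹ M X, ← hcomm, ← mul_assoc]
    _ = M⁻¹ * X * (M * M⁻¹) := by rw [← mul_assoc, mul_assoc (M⁻¹ * X)]
    _ = M⁻¹ * X := by rw [hMinv, mul_one]
  -- the inner PSD matrix
  have hinner : (X ^ 5 + (2 * ε) • X ^ 3 + (ε ^ 2 - c) • X).PosSemidef := by
    have h5 : (X ^ 5).PosSemidef := hX.pow 5
    have h3 : ((2 * ε) • X ^ 3).PosSemidef :=
      psd_smul_aux (by positivity : (0:ℝ) ≤ 2 * ε) (hX.pow 3)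
    have h1 : ((ε ^ 2 - c) • X).PosSemidef :=
      psd_smul_aux (by linarith : (0:ℝ) ≤ ε ^ 2 - c) hX
    exact (h5.add h3).add h1
  -- key identity
  have hkey : X - c • (M⁻¹ ^ 2 * X) = M⁻¹ * (X ^ 5 + (2 * ε) • X ^ 3 + (ε ^ 2 - c) • X) * M⁻¹ := by
    have hMXM : M * X * M = X ^ 5 + (2 * ε) • X ^ 3 + (ε ^ 2) • X := by
      simp only [hM, add_mul, mul_add, Matrix.smul_mul, Matrix.mul_smul, one_mul, mul_one,
        smul_smul, pow_succ, pow_zero, mul_assoc, two_smul, sq, add_smul]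
      module
    have hexp : X ^ 5 + (2 * ε) • X ^ 3 + (ε ^ 2 - c) • X = M * X * M - c • X := by
      rw [hMXM, sub_smul]; abel
    rw [hexp, mul_sub, sub_mul]
    congr 1
    · symm
      calc M⁻¹ * (M * X * M) * M⁻¹ = (M⁻¹ * M) * X * (M * M⁻¹) := by
            simp only [mul_assoc]
      _ = X := by rw [hMinv', hMinv, one_mul, mul_one]
    · rw [Matrix.mul_smul, Matrix.smul_mul, pow_two]
      congr 1
      calc M⁻¹ * M⁻¹ * X = M⁻¹ * (M⁻¹ * X) := by rw [mul_assoc]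
      _ = M⁻¹ * (X * M⁻¹) := by rw [hcommInv]
      _ = M⁻¹ * X * M⁻¹ := by rw [mul_assoc]
  have hconj : (M⁻¹ * (X ^ 5 + (2 * ε) • X ^ 3 + (ε ^ 2 - c) • X) * M⁻¹).PosSemidef := by
    have hMinvherm : (M⁻¹).IsHermitian := hMherm.inv
    have h := hinner.mul_mul_conjTranspose_same M⁻¹
    rwa [hMinvherm.eq] at h
  have hgoal : X - (2 * α) • ((2 * ε * (1 + ε ^ q)) • ((M⁻¹) ^ 2 * X))
      = X - c • (M⁻¹ ^ 2 * X) := by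
    rw [smul_smul, hc]
  rw [hXsym, ← hM, hgoal, hkey]
  exact hconj
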